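/- arXiv:2104.13138 — 3 statements merged into one kernel-verified Lean document; each statement's English description precedes it below -/
import Mathlib

section
/- Every recursive measure on proofs is invariant under tree unraveling: if P is a proof for T ⊨ η and P_T is its unraveling into a tree starting at the sink, then m(P) = m(P_T). -/
/-- A (finite, directed, labeled) hypergraph: vertices, hyperedges `(S,d)` with a finite
source set `S` and target `d`, and a vertex labeling function. -/
structure ProofHypergraph (V : Type) (L : Type) where
  verts : Set V
  edges : Set (Finset V × V)
  labl : V → L

namespace ProofHypergraph

variable {V L : Type}

/-- Every hyperedge has its sources and target among the vertices. -/
def WellFormed (H : ProofHypergraph V L) : Prop :=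
  ∀ e ∈ H.edges, (e.1 : Set V) ⊆ H.verts ∧ e.2 ∈ H.verts

/-- One step along a hyperedge: `u` is a source of a hyperedge with target `w`. -/
def Step (H : ProofHypergraph V L) (u w : V) : Prop :=
  ∃ S : Finset V, (S, w) ∈ H.edges ∧ u ∈ S

/-- A path, represented by its (nonempty) list of vertices `d₀, d₁, …, d_q`;
its length is `q = p.length - 1`. -/
def IsPathList (H : ProofHypergraph V L) (p : List V) : Prop :=
  p ≠ [] ∧ p.Chain' H.Step ∧ ∀ x ∈ p, x ∈ H.verts

/-- `u` reaches `w` via a path of positive length. -/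
def Reaches (H : ProofHypergraph V L) (u w : V) : Prop :=
  ∃ p : List V, H.IsPathList p ∧ p.head? = some u ∧ p.getLast? = some w ∧ 2 ≤ p.length

/-- Acyclic: no path of positive length from a vertex to itself. -/
def Acyclic (H : ProofHypergraph V L) : Prop := ∀ u : V, ¬ H.Reaches u u

/-- A sink: a vertex occurring in the source set of no hyperedge. -/
def IsSink (H : ProofHypergraph V L) (s : V) : Prop :=
  s ∈ H.verts ∧ ∀ e ∈ H.edges, s ∉ e.1

/-- A leaf: a vertex with no incoming hyperedge. -/
def IsLeaf (H : ProofHypergraph V L) (w : V) : Prop :=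
  w ∈ H.verts ∧ ∀ e ∈ H.edges, e.2 ≠ w

/-- Every vertex has at most one incoming hyperedge. -/
def AtMostOneIn (H : ProofHypergraph V L) : Prop :=
  ∀ S₁ S₂ : Finset V, ∀ d : V, (S₁, d) ∈ H.edges → (S₂, d) ∈ H.edges → S₁ = S₂

/-- A (structural) proof with sink `v`: a finite, well-formed, acyclic hypergraph with
at most one incoming hyperedge per vertex and exactly one sink, namely `v`. -/
def IsProofOf (H : ProofHypergraph V L) (v : V) : Prop :=
  H.WellFormed ∧ H.verts.Finite ∧ H.Acyclic ∧ H.AtMostOneIn ∧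
  H.IsSink v ∧ ∀ w : V, H.IsSink w → w = v

/-- A proof for `T ⊨ η` w.r.t. a consequence relation `ent`: a grounded
(leaves labeled by theory sentences) and sound (each hyperedge is a valid inference)
proof whose unique sink `v` is labeled `η`. -/
def IsProofFor (ent : Set L → L → Prop) (T : Set L) (η : L)
    (H : ProofHypergraph V L) (v : V) : Prop :=
  H.IsProofOf v ∧ H.labl v = η ∧
  (∀ w : V, H.IsLeaf w → H.labl w ∈ T) ∧
  ∀ e ∈ H.edges, ent (H.labl '' (e.1 : Set V)) (H.labl e.2)

/-- Subgraph relation. -/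
def IsSubgraph (H' H : ProofHypergraph V L) : Prop :=
  H'.verts ⊆ H.verts ∧ H'.edges ⊆ H.edges ∧ H'.labl = H.labl

/-- The subproof of `H` with sink `v`: the restriction of `H` to `v` together with all
vertices having a path to `v`, with all hyperedges of `H` among those vertices. -/
def subproofAt (H : ProofHypergraph V L) (v : V) : ProofHypergraph V L where
  verts := {w | w ∈ H.verts ∧ (w = v ∨ H.Reaches w v)}
  edges := {e | e ∈ H.edges ∧ (e.2 = v ∨ H.Reaches e.2 v)}
  labl := H.labl

end ProofHypergraph

namespace ProofHypergraph

/-- A measure `m` on hypergraphs (meant to be applied to proofs) is *recursive* with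
leaf function `leafm` and edge function `edgem` if, on every proof, it satisfies the
recursive equations: the value of a single-vertex proof is given by `leafm` applied to
its label, and the value of a proof whose sink has incoming hyperedge `(S,v)` is given
by `edgem` applied to the labels of the hyperedge and the multiset of values of the
direct subproofs. -/
def RecursiveOn {V L : Type} [DecidableEq L] (m : ProofHypergraph V L → NNRat)
    (leafm : L → NNRat) (edgem : Finset L × L → Multiset NNRat → NNRat) : Prop :=
  ∀ (H : ProofHypergraph V L) (v : V), H.IsProofOf v →
    ((H.verts = {v} ∧ H.edges = ∅) → m H = leafm (H.labl v)) ∧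
    ∀ S : Finset V, (S, v) ∈ H.edges →
      m H = edgem (S.image H.labl, H.labl v) (S.val.map fun w => m (H.subproofAt w))

/-- Monotonicity of an edge function: replacing an element `q` of the multiset argument
by some `q' ≤ q` does not increase the value. -/
def MonotoneEdge {L : Type} (edgem : Finset L × L → Multiset NNRat → NNRat) : Prop :=
  ∀ (lab : Finset L × L) (Q : Multiset NNRat) (q q' : NNRat),
    q ∈ Q → q' ≤ q → edgem lab (q' ::ₘ Q.erase q) ≤ edgem lab Q

end ProofHypergraph

namespace ProofHypergraph

/-- The unraveling of a hypergraph `H` at a vertex `v`: vertices are the paths of `H`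
ending in `v` (the path `[v]` of length 0 represents `v` itself); there is a hyperedge
from the set of one-step extensions `{d' :: p | d' ∈ S}` to `p` whenever `(S, d)` is a
hyperedge of `H` into the first vertex `d` of `p`; labels are inherited from the
starting vertices of paths. -/
def unravel {V L : Type} [DecidableEq V] (H : ProofHypergraph V L) (v : V) :
    ProofHypergraph (List V) L where
  verts := {p | H.IsPathList p ∧ p.getLast? = some v}
  edges := {e | ∃ (d : V) (ps : List V) (S : Finset V),
      H.IsPathList (d :: ps) ∧ (d :: ps).getLast? = some v ∧ (S, d) ∈ H.edges ∧
      e = (S.image (fun u => u :: d :: ps), d :: ps)}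
  labl := fun p => H.labl (p.headD v)

end ProofHypergraph

namespace ProofHypergraph

variable {V L : Type}

/-! ### Auxiliary development -/

lemma hg_ext {H₁ H₂ : ProofHypergraph V L} (hv : H₁.verts = H₂.verts)
    (he : H₁.edges = H₂.edges) (hl : H₁.labl = H₂.labl) : H₁ = H₂ := by
  cases H₁; cases H₂; simp_all

variable {H : ProofHypergraph V L}

lemma IsPathList.prefix {p q : List V} (hp : H.IsPathList p) (hq : q <+: p) (hne : q ≠ []) :
    H.IsPathList q :=
  ⟨hne, hp.2.1.prefix hq, fun x hx => hp.2.2 x (hq.subset hx)⟩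

lemma IsPathList.suffix {p q : List V} (hp : H.IsPathList p) (hq : q <:+ p) (hne : q ≠ []) :
    H.IsPathList q :=
  ⟨hne, hp.2.1.suffix hq, fun x hx => hp.2.2 x (hq.subset hx)⟩

lemma reaches_of_step {u w : V} (hu : u ∈ H.verts) (hw : w ∈ H.verts) (h : H.Step u w) :
    H.Reaches u w := by
  refine ⟨[u, w], ⟨by simp, List.isChain_pair.mpr h, ?_⟩, rfl, rfl, by simp⟩
  intro x hx
  rcases List.mem_pair.mp hx with rfl | rfl <;> assumption

lemma Step.reaches_trans {u w x : V} (hu : u ∈ H.verts) (h : H.Step u w)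
    (hr : H.Reaches w x) : H.Reaches u x := by
  obtain ⟨p, ⟨hne, hch, hmem⟩, hh, hl, hlen⟩ := hr
  cases p with
  | nil => simp at hh
  | cons a p' =>
    obtain rfl : a = w := by simpa using hh
    refine ⟨u :: a :: p', ⟨by simp, List.isChain_cons_cons.mpr ⟨h, hch⟩, ?_⟩, rfl, by simpa using hl,
      by simp⟩
    intro y hy
    rcases List.mem_cons.mp hy with rfl | hy
    · exact hu
    · exact hmem _ hy

lemma Reaches.step_trans {u w x : V} (hx : x ∈ H.verts) (hr : H.Reaches u w)
    (h : H.Step w x) : H.Reaches u x := by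
  obtain ⟨p, ⟨hne, hch, hmem⟩, hh, hl, hlen⟩ := hr
  refine ⟨p ++ [x], ⟨by simp, List.isChain_append.mpr ⟨hch, List.isChain_singleton x, ?_⟩, ?_⟩,
    ?_, List.getLast?_concat, ?_⟩
  · intro a ha b hb
    simp only [List.head?_cons, Option.mem_def, Option.some.injEq] at hb
    subst hb
    rw [hl] at ha
    obtain rfl : w = a := by simpa using ha
    exact h
  · intro y hy
    rcases List.mem_append.mp hy with hy | hy
    · exact hmem _ hy
    · obtain rfl : y = x := by simpa using hy
      exact hx
  · cases p with
    | nil => simp at hh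
    | cons a p' => simpa using hh
  · simp only [List.length_append, List.length_cons]
    omega

lemma IsPathList.concat_step {p : List V} {w u : V} (hp : H.IsPathList p)
    (hl : p.getLast? = some w) (hs : H.Step w u) (hu : u ∈ H.verts) :
    H.IsPathList (p ++ [u]) := by
  refine ⟨by simp, List.isChain_append.mpr ⟨hp.2.1, List.isChain_singleton u, ?_⟩, ?_⟩
  · intro a ha b hb
    simp only [List.head?_cons, Option.mem_def, Option.some.injEq] at hb
    subst hb
    rw [hl] at ha
    obtain rfl : w = a := by simpa using ha
    exact hs
  · intro y hy
    rcases List.mem_append.mp hy with hy | hy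
    · exact hp.2.2 _ hy
    · obtain rfl : y = u := by simpa using hy
      exact hu

lemma mem_of_getLast?' {α : Type*} {l : List α} {a : α} (h : l.getLast? = some a) : a ∈ l := by
  obtain ⟨h', h2⟩ := List.mem_getLast?_eq_getLast (show a ∈ l.getLast? from h ▸ rfl)
  exact h2 ▸ List.getLast_mem h'

lemma IsPathList.mem_reaches {p : List V} {w x : V} (hp : H.IsPathList p)
    (hl : p.getLast? = some w) (hx : x ∈ p) : x = w ∨ H.Reaches x w := by
  obtain ⟨s, t, rfl⟩ := List.append_of_mem hx
  have hsuf : H.IsPathList (x :: t) := hp.suffix ⟨s, rfl⟩ (by simp)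
  cases t with
  | nil =>
    left
    have h2 : (s ++ [x]).getLast? = some x := List.getLast?_concat
    rw [show s ++ x :: [] = s ++ [x] from rfl, h2] at hl
    exact (Option.some.injEq _ _).mp hl
  | cons b t' =>
    right
    refine ⟨x :: b :: t', hsuf, rfl, ?_, by simp⟩
    rwa [List.getLast?_append_of_ne_nil _ (by simp)] at hl

lemma reaches_mem {u w : V} (h : H.Reaches u w) : u ∈ H.verts ∧ w ∈ H.verts := by
  obtain ⟨p, ⟨hne, _, hmem⟩, hh, hl, _⟩ := h
  exact ⟨hmem _ (List.mem_of_mem_head? hh), hmem _ (mem_of_getLast?' hl)⟩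

lemma chain'_last_step {α : Type*} {R : α → α → Prop} :
    ∀ (p : List α) {z : α}, p.Chain' R → p.getLast? = some z → 2 ≤ p.length → ∃ y, R y z
  | [], _, _, h, _ => by simp at h
  | [a], _, _, h, hlen => by simp at hlen
  | a :: b :: l, z, hch, hlast, _ => by
    unfold List.Chain' at hch
    rw [List.isChain_cons_cons] at hch
    cases l with
    | nil =>
      obtain rfl : b = z := by simpa using hlast
      exact ⟨a, hch.1⟩
    | cons c l' =>
      exact chain'_last_step (b :: c :: l') hch.2 (by simpa using hlast) (by simp)

lemma exists_edge_of_reaches {x u : V} (h : H.Reaches x u) : ∃ S, (S, u) ∈ H.edges := by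
  obtain ⟨p, ⟨hne, hch, _⟩, _, hl, hlen⟩ := h
  obtain ⟨y, hy⟩ := chain'_last_step p hch hl hlen
  obtain ⟨S, hS, _⟩ := hy
  exact ⟨S, hS⟩

lemma reaches_exists_step {x y : V} (h : H.Reaches x y) : ∃ a b, H.Step a b := by
  obtain ⟨p, ⟨_, hch, _⟩, _, _, hlen⟩ := h
  match p, hch, hlen with
  | a :: b :: l, hch, _ => exact ⟨a, b, (List.isChain_cons_cons.mp hch).1⟩

lemma IsPathList.nodup (hac : H.Acyclic) : ∀ {p : List V}, H.IsPathList p → p.Nodup := by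
  intro p
  induction p with
  | nil => simp [IsPathList]
  | cons x p' ih =>
    intro hp
    rw [List.nodup_cons]
    constructor
    · intro hx
      obtain ⟨s, t, rfl⟩ := List.append_of_mem hx
      have hpre : H.IsPathList ((x :: s) ++ [x]) :=
        hp.prefix ⟨t, by simp⟩ (by simp)
      exact hac x ⟨(x :: s) ++ [x], hpre, by simp, List.getLast?_concat, by simp⟩
    · cases p' with
      | nil => simp
      | cons y p'' => exact ih (hp.suffix ⟨[x], rfl⟩ (by simp))

lemma finite_lists [DecidableEq V] {s : Set V} (hs : s.Finite) (n : ℕ) :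
    {l : List V | (∀ x ∈ l, x ∈ s) ∧ l.length ≤ n}.Finite := by
  haveI : Finite ↥s := hs.to_subtype
  have h1 : {l : List ↥s | l.length ≤ n}.Finite := List.finite_length_le _ n
  apply (h1.image (List.map (Subtype.val))).subset
  rintro l ⟨hmem, hlen⟩
  refine ⟨l.attach.map (fun x => (⟨x.1, hmem x.1 x.2⟩ : ↥s)), by simpa, ?_⟩
  rw [List.map_map]
  simp

lemma pathlist_finite [DecidableEq V] (hfin : H.verts.Finite) (hac : H.Acyclic) :
    {p : List V | H.IsPathList p}.Finite := by
  apply (finite_lists hfin hfin.toFinset.card).subset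
  intro p hp
  refine ⟨hp.2.2, ?_⟩
  have hnd : p.Nodup := IsPathList.nodup hac hp
  calc p.length = p.toFinset.card := (List.toFinset_card_of_nodup hnd).symm
    _ ≤ hfin.toFinset.card := Finset.card_le_card (by
        intro x hx
        rw [List.mem_toFinset] at hx
        rw [Set.Finite.mem_toFinset]
        exact hp.2.2 x hx)

lemma reaches_sink {u : V} (hpf : H.IsProofOf u) : ∀ w ∈ H.verts, w = u ∨ H.Reaches w u := by
  obtain ⟨hwf, hfin, hac, _, hsink, huniq⟩ := hpf
  have key : ∀ n (w : V), w ∈ H.verts → {x | H.Reaches w x}.ncard ≤ n →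
      w = u ∨ H.Reaches w u := by
    intro n
    induction n with
    | zero =>
      intro w hw hcard
      by_cases hs : H.IsSink w
      · exact Or.inl (huniq w hs)
      · exfalso
        simp only [IsSink, not_and, not_forall] at hs
        obtain ⟨e, he, hwe⟩ := hs hw
        rw [not_not] at hwe
        have hstep : H.Step w e.2 := ⟨e.1, by rwa [Prod.mk.eta], hwe⟩
        have hd : e.2 ∈ H.verts := (hwf e he).2
        have hreach : H.Reaches w e.2 := reaches_of_step hw hd hstep
        have hfin' : {x | H.Reaches w x}.Finite :=
          hfin.subset (fun x hx => (reaches_mem hx).2)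
        have : 0 < {x | H.Reaches w x}.ncard :=
          (Set.ncard_pos hfin').mpr ⟨e.2, hreach⟩
        omega
    | succ n ih =>
      intro w hw hcard
      by_cases hs : H.IsSink w
      · exact Or.inl (huniq w hs)
      · simp only [IsSink, not_and, not_forall] at hs
        obtain ⟨e, he, hwe⟩ := hs hw
        rw [not_not] at hwe
        have hstep : H.Step w e.2 := ⟨e.1, by rwa [Prod.mk.eta], hwe⟩
        have hd : e.2 ∈ H.verts := (hwf e he).2
        have hreach : H.Reaches w e.2 := reaches_of_step hw hd hstep
        have hfin' : {x | H.Reaches w x}.Finite :=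
          hfin.subset (fun x hx => (reaches_mem hx).2)
        have hsub : {x | H.Reaches e.2 x} ⊆ {x | H.Reaches w x} :=
          fun x hx => hstep.reaches_trans hw hx
        have hlt : {x | H.Reaches e.2 x}.ncard < {x | H.Reaches w x}.ncard := by
          apply Set.ncard_lt_ncard _ hfin'
          refine ⟨hsub, fun hsup => hac e.2 (hsup hreach)⟩
        rcases ih e.2 hd (by omega) with h | h
        · exact Or.inr (h ▸ hreach)
        · exact Or.inr (hstep.reaches_trans hw h)
  intro w hw
  exact key _ w hw le_rfl

lemma proof_cases {u : V} (hpf : H.IsProofOf u) :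
    (H.verts = {u} ∧ H.edges = ∅) ∨ ∃ S, (S, u) ∈ H.edges := by
  by_cases h : ∃ S, (S, u) ∈ H.edges
  · exact Or.inr h
  · left
    have hE : H.edges = ∅ := by
      ext e
      simp only [Set.mem_empty_iff_false, iff_false]
      intro he
      have hd := (hpf.1 e he).2
      rcases reaches_sink hpf e.2 hd with h2 | hr
      · exact h ⟨e.1, by rwa [← h2, Prod.mk.eta]⟩
      · obtain ⟨S, hS⟩ := exists_edge_of_reaches hr
        exact h ⟨S, hS⟩
    refine ⟨?_, hE⟩
    apply Set.eq_singleton_iff_unique_mem.mpr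
    refine ⟨hpf.2.2.2.2.1.1, ?_⟩
    intro w hw
    rcases reaches_sink hpf w hw with h2 | hr
    · exact h2
    · obtain ⟨a, b, S, hS, _⟩ := reaches_exists_step hr
      rw [hE] at hS
      simp at hS

lemma chain'_imp_mem {α : Type*} {R S : α → α → Prop} :
    ∀ {l : List α}, (∀ a ∈ l, ∀ b ∈ l, R a b → S a b) → l.Chain' R → l.Chain' S
  | [], _, _ => List.isChain_nil
  | [_], _, _ => List.isChain_singleton _
  | a :: b :: l, himp, hch => by
    unfold List.Chain' at hch ⊢
    rw [List.isChain_cons_cons] at hch ⊢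
    exact ⟨himp a (by simp) b (by simp) hch.1,
      chain'_imp_mem (fun x hx y hy => himp x (List.mem_cons_of_mem _ hx) y (List.mem_cons_of_mem _ hy))
        hch.2⟩

lemma subproof_step {w x y : V} (h : (H.subproofAt w).Step x y) : H.Step x y := by
  obtain ⟨S, hS, hx⟩ := h
  exact ⟨S, hS.1, hx⟩

lemma subproof_pathlist {w : V} {p : List V} (h : (H.subproofAt w).IsPathList p) :
    H.IsPathList p :=
  ⟨h.1, h.2.1.imp (fun _ _ => subproof_step), fun x hx => (h.2.2 x hx).1⟩

lemma subproof_reaches {w x y : V} (h : (H.subproofAt w).Reaches x y) : H.Reaches x y := by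
  obtain ⟨p, hp, hh, hl, hlen⟩ := h
  exact ⟨p, subproof_pathlist hp, hh, hl, hlen⟩

lemma pathlist_subproof {w : V} {p : List V} (hp : H.IsPathList p)
    (hl : p.getLast? = some w) : (H.subproofAt w).IsPathList p := by
  refine ⟨hp.1, ?_, fun x hx => ⟨hp.2.2 x hx, hp.mem_reaches hl hx⟩⟩
  refine chain'_imp_mem (fun a _ b hb hab => ?_) hp.2.1
  obtain ⟨S, hS, haS⟩ := hab
  exact ⟨S, ⟨hS, hp.mem_reaches hl hb⟩, haS⟩

lemma subproof_isProofOf {u w : V} (hpf : H.IsProofOf u) (hw : w ∈ H.verts) :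
    (H.subproofAt w).IsProofOf w := by
  obtain ⟨hwf, hfin, hac, hone, hsink, huniq⟩ := hpf
  refine ⟨?_, ?_, ?_, ?_, ?_, ?_⟩
  · rintro e ⟨he, hcase⟩
    refine ⟨?_, (hwf e he).2, hcase⟩
    intro x hx
    have hxv : x ∈ H.verts := (hwf e he).1 hx
    have hstep : H.Step x e.2 := ⟨e.1, by rwa [Prod.mk.eta], hx⟩
    refine ⟨hxv, ?_⟩
    rcases hcase with h2 | hr
    · exact Or.inr (h2 ▸ reaches_of_step hxv (h2 ▸ (hwf e he).2) hstep)
    · exact Or.inr (hstep.reaches_trans hxv hr)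
  · exact hfin.subset (fun x hx => hx.1)
  · exact fun x hx => hac x (subproof_reaches hx)
  · intro S₁ S₂ d h1 h2
    exact hone S₁ S₂ d h1.1 h2.1
  · refine ⟨⟨hw, Or.inl rfl⟩, ?_⟩
    rintro e ⟨he, hcase⟩ hwe
    have hstep : H.Step w e.2 := ⟨e.1, by rwa [Prod.mk.eta], hwe⟩
    rcases hcase with h2 | hr
    · exact hac w (reaches_of_step hw (h2 ▸ hw) (h2 ▸ hstep))
    · exact hac w (hstep.reaches_trans hw hr)
  · rintro x ⟨⟨hxv, hcase⟩, hxsink⟩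
    rcases hcase with h2 | hr
    · exact h2
    · exfalso
      obtain ⟨p, hp, hh, hl, hlen⟩ := hr
      match p, hh, hl, hlen, hp with
      | x' :: b :: l, hh, hl, _, hp =>
        obtain rfl : x' = x := by simpa using hh
        obtain ⟨S, hS, hxS⟩ := (List.isChain_cons_cons.mp hp.2.1).1
        have hbmem : b = w ∨ H.Reaches b w :=
          hp.mem_reaches hl (by simp)
        exact hxsink (S, b) ⟨hS, hbmem⟩ hxS


section Unravel

variable [DecidableEq V] {u : V} {t : List V} {lab : List V → L}

def shiftUnravel (H : ProofHypergraph V L) (u : V) (t : List V) (lab : List V → L) :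
    ProofHypergraph (List V) L where
  verts := {q | ∃ p, H.IsPathList p ∧ p.getLast? = some u ∧ q = p ++ t}
  edges := {e | ∃ (d : V) (ps : List V) (S : Finset V),
      H.IsPathList (d :: ps) ∧ (d :: ps).getLast? = some u ∧ (S, d) ∈ H.edges ∧
      e = (S.image (fun x => x :: ((d :: ps) ++ t)), (d :: ps) ++ t)}
  labl := lab

lemma shiftUnravel_step_shape {q q' : List V}
    (h : (H.shiftUnravel u t lab).Step q' q) : ∃ x, q' = x :: q := by
  obtain ⟨S', hS', hq'⟩ := h
  obtain ⟨d, ps, S, hp, hl, he, heq⟩ := hS'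
  obtain ⟨h1, h2⟩ := Prod.mk.injEq .. ▸ heq
  subst h2
  rw [h1] at hq'
  obtain ⟨x, _, hx⟩ := Finset.mem_image.mp hq'
  exact ⟨x, hx.symm⟩

lemma shiftUnravel_step_length {q q' : List V}
    (h : (H.shiftUnravel u t lab).Step q' q) : q.length < q'.length := by
  obtain ⟨x, rfl⟩ := shiftUnravel_step_shape h
  simp

lemma chain'_head_last_lt {α : Type*} (f : α → ℕ) {R : α → α → Prop}
    (hR : ∀ a b, R a b → f b < f a) :
    ∀ (p : List α) {a b : α}, p.Chain' R → p.head? = some a → p.getLast? = some b →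
      2 ≤ p.length → f b < f a
  | [], _, _, _, hh, _, _ => by simp at hh
  | [_], _, _, _, _, _, hlen => by simp at hlen
  | x :: y :: l, a, b, hch, hh, hl, _ => by
    obtain rfl : x = a := by simpa using hh
    unfold List.Chain' at hch
    rw [List.isChain_cons_cons] at hch
    cases l with
    | nil =>
      obtain rfl : y = b := by simpa using hl
      exact hR _ _ hch.1
    | cons c l' =>
      exact lt_trans
        (chain'_head_last_lt f hR (y :: c :: l') hch.2 rfl (by simpa using hl) (by simp))
        (hR _ _ hch.1)

lemma shiftUnravel_acyclic : (H.shiftUnravel u t lab).Acyclic := by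
  intro q hq
  obtain ⟨p, ⟨hne, hch, _⟩, hh, hl, hlen⟩ := hq
  exact lt_irrefl _ (chain'_head_last_lt List.length
    (fun a b h => shiftUnravel_step_length h) p hch hh hl hlen)

lemma chain'_shiftUnravel_suffix :
    ∀ (p : List (List V)) {a b : List V}, p.Chain' (H.shiftUnravel u t lab).Step →
      p.head? = some a → p.getLast? = some b → b <:+ a
  | [], _, _, _, hh, _ => by simp at hh
  | [x], a, b, _, hh, hl => by
    have h1 : x = a := by simpa using hh
    have h2 : x = b := by simpa using hl
    rw [← h1, ← h2]
  | x :: y :: l, a, b, hch, hh, hl => by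
    obtain rfl : x = a := by simpa using hh
    unfold List.Chain' at hch
    rw [List.isChain_cons_cons] at hch
    obtain ⟨z, rfl⟩ := shiftUnravel_step_shape hch.1
    exact (chain'_shiftUnravel_suffix (y :: l) hch.2 rfl (by simpa using hl)).trans
      (List.suffix_cons _ _)

lemma shiftUnravel_reaches_suffix {a b : List V}
    (h : (H.shiftUnravel u t lab).Reaches a b) : ∃ r, r ≠ [] ∧ a = r ++ b := by
  obtain ⟨p, ⟨hne, hch, _⟩, hh, hl, hlen⟩ := h
  obtain ⟨r, hr⟩ := chain'_shiftUnravel_suffix p hch hh hl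
  refine ⟨r, ?_, hr.symm⟩
  rintro rfl
  rw [List.nil_append] at hr
  subst hr
  exact lt_irrefl _ (chain'_head_last_lt List.length
    (fun a b h => shiftUnravel_step_length h) p hch hh hl hlen)


lemma shiftUnravel_isProofOf (hpf : H.IsProofOf u) :
    (H.shiftUnravel u t lab).IsProofOf (u :: t) := by
  obtain ⟨hwf, hfin, hac, hone, hsink, huniq⟩ := hpf
  have huv : u ∈ H.verts := hsink.1
  have hmemu : (u :: t) ∈ (H.shiftUnravel u t lab).verts :=
    ⟨[u], ⟨by simp, List.isChain_singleton u, by simpa⟩, by simp, by simp⟩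
  refine ⟨?_, ?_, shiftUnravel_acyclic, ?_, ?_, ?_⟩
  · rintro e ⟨d, ps, S, hp, hl, he, rfl⟩
    constructor
    · intro q hq
      simp only [Finset.coe_image, Set.mem_image, Finset.mem_coe] at hq
      obtain ⟨x, hxS, rfl⟩ := hq
      refine ⟨x :: d :: ps, ⟨by simp, List.isChain_cons_cons.mpr ⟨⟨S, he, hxS⟩, hp.2.1⟩, ?_⟩,
        by simpa using hl, by simp⟩
      intro y hy
      rcases List.mem_cons.mp hy with rfl | hy
      · exact (hwf (S, d) he).1 hxS
      · exact hp.2.2 y hy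
    · exact ⟨d :: ps, hp, hl, rfl⟩
  · apply ((pathlist_finite hfin hac).image (fun p => p ++ t)).subset
    rintro q ⟨p, hp, _, rfl⟩
    exact ⟨p, hp, rfl⟩
  · rintro S₁ S₂ q ⟨d₁, ps₁, T₁, hp₁, hl₁, he₁, heq₁⟩ ⟨d₂, ps₂, T₂, hp₂, hl₂, he₂, heq₂⟩
    obtain ⟨hS₁, hq₁⟩ := Prod.mk.injEq .. ▸ heq₁
    obtain ⟨hS₂, hq₂⟩ := Prod.mk.injEq .. ▸ heq₂
    have hpp : (d₁ :: ps₁ : List V) = d₂ :: ps₂ :=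
      List.append_cancel_right (hq₁.symm.trans hq₂)
    obtain ⟨rfl, rfl⟩ : d₁ = d₂ ∧ ps₁ = ps₂ := by simpa using hpp
    have : T₁ = T₂ := hone T₁ T₂ d₁ he₁ he₂
    subst this
    exact hS₁.trans hS₂.symm
  · refine ⟨hmemu, ?_⟩
    rintro e ⟨d, ps, S, hp, hl, he, rfl⟩ hmem
    simp only [Finset.mem_image] at hmem
    obtain ⟨x, _, hx⟩ := hmem
    have := congrArg List.length hx
    simp at this
    omega
  · rintro q ⟨⟨p, hp, hl, rfl⟩, hqsink⟩
    cases p with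
    | nil => exact absurd rfl hp.1
    | cons d ps =>
      cases ps with
      | nil =>
        obtain rfl : d = u := by simpa using hl
        rfl
      | cons d' ps' =>
        exfalso
        obtain ⟨S, hS, hdS⟩ := (List.isChain_cons_cons.mp hp.2.1).1
        refine hqsink (S.image (fun x => x :: ((d' :: ps') ++ t)), (d' :: ps') ++ t)
          ⟨d', ps', S, hp.suffix ⟨[d], rfl⟩ (by simp), by simpa using hl, hS, rfl⟩ ?_
        exact Finset.mem_image.mpr ⟨d, hdS, rfl⟩

lemma shiftUnravel_step_of {x : V} {q : List V} (hq : q ≠ [])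
    (hp : H.IsPathList (x :: q)) (hl : (x :: q).getLast? = some u) :
    (H.shiftUnravel u t lab).Step ((x :: q) ++ t) (q ++ t) := by
  cases q with
  | nil => exact absurd rfl hq
  | cons d ps =>
    obtain ⟨S, hS, hxS⟩ := (List.isChain_cons_cons.mp hp.2.1).1
    refine ⟨S.image (fun y => y :: ((d :: ps) ++ t)),
      ⟨d, ps, S, hp.suffix ⟨[x], rfl⟩ (by simp), by simpa using hl, hS, rfl⟩, ?_⟩
    exact Finset.mem_image.mpr ⟨x, hxS, rfl⟩

lemma shiftUnravel_reaches :
    ∀ (p₁ : List V) {p₂ : List V}, p₁ ≠ [] → p₂ ≠ [] → H.IsPathList (p₁ ++ p₂) →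
      (p₁ ++ p₂).getLast? = some u →
      (H.shiftUnravel u t lab).Reaches ((p₁ ++ p₂) ++ t) (p₂ ++ t)
  | [], _, h1, _, _, _ => absurd rfl h1
  | [x], p₂, _, h2, hp, hl => by
    have hstep := shiftUnravel_step_of (t := t) (lab := lab) h2 (by simpa using hp)
      (by simpa using hl)
    have hv1 : ((x :: p₂) ++ t) ∈ (H.shiftUnravel u t lab).verts :=
      ⟨x :: p₂, by simpa using hp, by simpa using hl, rfl⟩
    have hv2 : (p₂ ++ t) ∈ (H.shiftUnravel u t lab).verts :=
      ⟨p₂, (by simpa using hp : H.IsPathList (x :: p₂)).suffix ⟨[x], rfl⟩ h2,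
        by rw [← List.getLast?_append_of_ne_nil [x] h2]; simpa using hl, rfl⟩
    simpa using reaches_of_step hv1 hv2 hstep
  | x :: y :: p₁', p₂, _, h2, hp, hl => by
    have hne : (y :: p₁') ++ p₂ ≠ [] := by simp
    have hp' : H.IsPathList ((y :: p₁') ++ p₂) :=
      (by simpa using hp : H.IsPathList (x :: ((y :: p₁') ++ p₂))).suffix ⟨[x], by simp⟩ hne
    have hl' : ((y :: p₁') ++ p₂).getLast? = some u := by
      rw [← List.getLast?_append_of_ne_nil [x] hne]; simpa using hl
    have hstep := shiftUnravel_step_of (t := t) (lab := lab) hne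
      (by simpa using hp) (by simpa using hl)
    have hrec := shiftUnravel_reaches (y :: p₁') (by simp) h2 hp' hl'
    have hv1 : ((x :: ((y :: p₁') ++ p₂)) ++ t) ∈ (H.shiftUnravel u t lab).verts :=
      ⟨x :: ((y :: p₁') ++ p₂), by simpa using hp, by simpa using hl, rfl⟩
    have := Step.reaches_trans hv1 hstep hrec
    simpa using this


lemma aux_reach_or {w : V} (hu : u ∈ H.verts) (hsw : H.Step w u) {p : List V}
    (hp : H.IsPathList p) (hl : p.getLast? = some w) :
    p ++ (u :: t) = w :: u :: t ∨
      (H.shiftUnravel u t lab).Reaches (p ++ (u :: t)) (w :: u :: t) := by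
  have hdecomp : p.dropLast ++ [w] = p := List.dropLast_append_getLast? w hl
  have hpu : H.IsPathList (p ++ [u]) := hp.concat_step hl hsw hu
  cases hdl : p.dropLast with
  | nil =>
    left
    rw [← hdecomp, hdl]
    simp
  | cons a r =>
    right
    have heq : (a :: r) ++ [w, u] = p ++ [u] := by
      rw [← hdecomp, hdl]
      simp
    have h := shiftUnravel_reaches (t := t) (lab := lab) (a :: r) (p₂ := [w, u]) (by simp)
      (by simp) (heq ▸ hpu) (by rw [heq]; exact List.getLast?_concat)
    rw [heq] at h
    simpa using h

lemma aux_decomp {w : V} {p : List V} (hp : H.IsPathList p) (hl : p.getLast? = some u)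
    (hcase : p ++ t = w :: u :: t ∨
      (H.shiftUnravel u t lab).Reaches (p ++ t) (w :: u :: t)) :
    ∃ r, p = r ++ [w, u] := by
  rcases hcase with heq | hre
  · refine ⟨[], ?_⟩
    have h2 : p ++ t = ([w, u]) ++ t := by simpa using heq
    simpa using List.append_cancel_right h2
  · obtain ⟨r, _, hreq⟩ := shiftUnravel_reaches_suffix hre
    refine ⟨r, ?_⟩
    have h2 : p ++ t = (r ++ [w, u]) ++ t := by rw [hreq]; simp
    exact List.append_cancel_right h2

lemma shiftUnravel_subproof_comm {w : V} (hpf : H.IsProofOf u) {Se : Finset V}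
    (hSe : (Se, u) ∈ H.edges) (hw : w ∈ Se) :
    (H.shiftUnravel u t lab).subproofAt (w :: u :: t)
      = (H.subproofAt w).shiftUnravel w (u :: t) lab := by
  have hu : u ∈ H.verts := hpf.2.2.2.2.1.1
  have hwv : w ∈ H.verts := (hpf.1 _ hSe).1 hw
  have hsw : H.Step w u := ⟨Se, hSe, hw⟩
  apply hg_ext
  · ext q
    constructor
    · rintro ⟨⟨p, hp, hl, rfl⟩, hcase⟩
      obtain ⟨r, rfl⟩ := aux_decomp hp hl hcase
      have hrw : H.IsPathList (r ++ [w]) := hp.prefix ⟨[u], by simp⟩ (by simp)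
      exact ⟨r ++ [w], pathlist_subproof hrw (List.getLast?_concat),
        List.getLast?_concat, by simp⟩
    · rintro ⟨p, hp, hl, rfl⟩
      have hpH : H.IsPathList p := subproof_pathlist hp
      have hpu : H.IsPathList (p ++ [u]) := hpH.concat_step hl hsw hu
      refine ⟨⟨p ++ [u], hpu, List.getLast?_concat, by simp⟩, ?_⟩
      exact aux_reach_or (t := t) (lab := lab) hu hsw hpH hl
  · ext e
    constructor
    · rintro ⟨⟨d, ps, S, hdp, hdl, hSd, rfl⟩, hcase⟩
      obtain ⟨r, hr⟩ := aux_decomp hdp hdl hcase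
      cases r with
      | nil =>
        obtain ⟨rfl, rfl⟩ : d = w ∧ ps = [u] := by simpa using hr
        refine ⟨d, [], S, ⟨by simp, List.isChain_singleton _, ?_⟩, by simp,
          ⟨hSd, Or.inl rfl⟩, ?_⟩
        · intro x hx
          obtain rfl : x = d := by simpa using hx
          exact ⟨hwv, Or.inl rfl⟩
        · simp
      | cons a r' =>
        obtain ⟨rfl, rfl⟩ : d = a ∧ ps = r' ++ [w, u] := by simpa using hr
        have hrw : H.IsPathList ((d :: r') ++ [w]) := hdp.prefix ⟨[u], by simp⟩ (by simp)
        refine ⟨d, r' ++ [w], S, pathlist_subproof (p := (d :: r') ++ [w]) hrw (List.getLast?_concat),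
          show (d :: (r' ++ [w])).getLast? = some w from (List.getLast?_concat (l := d :: r')),
          ⟨hSd, ?_⟩, ?_⟩
        · exact hrw.mem_reaches (List.getLast?_concat) (by simp)
        · simp
    · rintro ⟨d, ps, S, hdp, hdl, hSd, rfl⟩
      have hdpH : H.IsPathList (d :: ps) := subproof_pathlist hdp
      have hpu : H.IsPathList ((d :: ps) ++ [u]) := hdpH.concat_step hdl hsw hu
      constructor
      · refine ⟨d, ps ++ [u], S, by simpa using hpu, ?_, hSd.1, ?_⟩
        · simpa using (List.getLast?_concat (l := d :: ps))
        · simp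
      · exact aux_reach_or (t := t) (lab := lab) hu hsw hdpH hdl
  · rfl

end Unravel

section Main

variable {V L : Type} [DecidableEq V] [DecidableEq L]
  {leafm : L → NNRat} {edgem : Finset L × L → Multiset NNRat → NNRat}
  {mP : ProofHypergraph V L → NNRat} {mT : ProofHypergraph (List V) L → NNRat}

lemma main_invariance (hmP : RecursiveOn mP leafm edgem) (hmT : RecursiveOn mT leafm edgem) :
    ∀ (n : ℕ) (H : ProofHypergraph V L) (u : V), H.IsProofOf u → H.verts.ncard ≤ n →
      ∀ (t : List V) (lab : List V → L),
        (∀ p, H.IsPathList p → p.getLast? = some u → lab (p ++ t) = H.labl (p.headD u)) →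
        mP H = mT (H.shiftUnravel u t lab) := by
  intro n
  induction n with
  | zero =>
    intro H u hpf hcard t lab hlab
    exfalso
    have := (Set.ncard_pos hpf.2.1).mpr ⟨u, hpf.2.2.2.2.1.1⟩
    omega
  | succ n ih =>
    intro H u hpf hcard t lab hlab
    have hKpf := shiftUnravel_isProofOf (t := t) (lab := lab) hpf
    have huv : u ∈ H.verts := hpf.2.2.2.2.1.1
    have hlabu : lab (u :: t) = H.labl u := by
      simpa using hlab [u] ⟨by simp, List.isChain_singleton u, by simpa⟩ (by simp)
    rcases proof_cases hpf with ⟨hV, hE⟩ | ⟨Se, hSe⟩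
    · have h1 := (hmP H u hpf).1 ⟨hV, hE⟩
      have hsingle : ∀ p, H.IsPathList p → p = [u] := by
        intro p hp
        cases p with
        | nil => exact absurd rfl hp.1
        | cons x p' =>
          have hx : x = u := by
            have h3 := hp.2.2 x (by simp)
            rw [hV] at h3
            simpa using h3
          subst hx
          cases p' with
          | nil => rfl
          | cons y p'' =>
            exfalso
            obtain ⟨S, hS, _⟩ := (List.isChain_cons_cons.mp hp.2.1).1
            rw [hE] at hS
            exact hS
      have hKV : (H.shiftUnravel u t lab).verts = {u :: t} := by
        ext q
        constructor
        · rintro ⟨p, hp, hl, rfl⟩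
          rw [hsingle p hp]
          rfl
        · rintro rfl
          exact ⟨[u], ⟨by simp, List.isChain_singleton u, by simpa⟩, by simp, rfl⟩
      have hKE : (H.shiftUnravel u t lab).edges = ∅ := by
        ext e
        simp only [Set.mem_empty_iff_false, iff_false]
        rintro ⟨d, ps, S, _, _, hS, _⟩
        rw [hE] at hS
        exact hS
      have h2 := (hmT _ _ hKpf).1 ⟨hKV, hKE⟩
      rw [h1, h2]
      congr 1
      exact hlabu.symm
    · have h1 := (hmP H u hpf).2 Se hSe
      have hKedge : (Se.image (fun x => x :: (u :: t)), u :: t)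
          ∈ (H.shiftUnravel u t lab).edges :=
        ⟨u, [], Se, ⟨by simp, List.isChain_singleton u, by simpa⟩, by simp, hSe, rfl⟩
      have h2 := (hmT _ _ hKpf).2 _ hKedge
      rw [h1, h2]
      have hlabs : ∀ x ∈ Se, lab (x :: u :: t) = H.labl x := by
        intro x hx
        have hxv : x ∈ H.verts := (hpf.1 _ hSe).1 hx
        have hpl : H.IsPathList [x, u] := by
          refine ⟨by simp, List.isChain_pair.mpr ⟨Se, hSe, hx⟩, ?_⟩
          intro y hy
          rcases List.mem_pair.mp hy with rfl | rfl
          · exact hxv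
          · exact huv
        simpa using hlab [x, u] hpl (by simp)
      have hinj : Set.InjOn (fun x => x :: (u :: t)) ↑Se := by
        intro a _ b _ hab
        simpa using hab
      congr 1
      · refine Prod.ext ?_ hlabu.symm
        show Se.image H.labl = ((Se.image (fun x => x :: (u :: t))).image lab)
        rw [Finset.image_image]
        apply Finset.image_congr
        intro x hx
        exact (hlabs x hx).symm
      · show (Se.val.map fun w => mP (H.subproofAt w))
          = ((Se.image (fun x => x :: (u :: t))).val.map
              fun q => mT ((H.shiftUnravel u t lab).subproofAt q))
        rw [Finset.image_val_of_injOn hinj, Multiset.map_map]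
        apply Multiset.map_congr rfl
        intro x hx
        rw [Finset.mem_val] at hx
        have hxv : x ∈ H.verts := (hpf.1 _ hSe).1 hx
        show mP (H.subproofAt x)
          = mT ((H.shiftUnravel u t lab).subproofAt (x :: u :: t))
        rw [shiftUnravel_subproof_comm hpf hSe hx]
        have hss : (H.subproofAt x).verts ⊂ H.verts := by
          constructor
          · intro y hy
            exact hy.1
          · intro hsup
            have hu' : u ∈ (H.subproofAt x).verts := hsup huv
            rcases hu'.2 with h | h
            · exact hpf.2.2.2.2.1.2 (Se, u) hSe (by rwa [← h] at hx)
            · exact hpf.2.2.1 u (h.step_trans huv ⟨Se, hSe, hx⟩)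
        have hlt : (H.subproofAt x).verts.ncard < H.verts.ncard :=
          Set.ncard_lt_ncard hss hpf.2.1
        refine ih (H.subproofAt x) x (subproof_isProofOf hpf hxv) (by omega) (u :: t) lab ?_
        intro p hp hl
        have hpH := subproof_pathlist hp
        have hpu : H.IsPathList (p ++ [u]) := hpH.concat_step hl ⟨Se, hSe, hx⟩ huv
        have h3 := hlab (p ++ [u]) hpu (List.getLast?_concat)
        rw [List.append_assoc] at h3
        cases p with
        | nil => exact absurd rfl hp.1
        | cons a p' => simpa [subproofAt] using h3

end Main

end ProofHypergraph

/-- Every recursive measure on proofs is invariant under tree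
unraveling: if `P` is a proof for `T ⊨ η` (with sink `v`) and `P_T = unravel P v` is
its unraveling into a tree starting at the sink, then `m(P) = m(P_T)`.
Here `mP` and `mT` are the instances of the recursive measure, determined by the same
leaf and edge functions, on hypergraphs over the two vertex types. -/
theorem recursive_measure_unraveling_invariant {V L : Type} [DecidableEq V] [DecidableEq L]
    (ent : Set L → L → Prop) (T : Set L) (η : L)
    (leafm : L → NNRat) (edgem : Finset L × L → Multiset NNRat → NNRat)
    (mP : ProofHypergraph V L → NNRat) (mT : ProofHypergraph (List V) L → NNRat)
    (hmP : ProofHypergraph.RecursiveOn mP leafm edgem)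
    (hmT : ProofHypergraph.RecursiveOn mT leafm edgem)
    (P : ProofHypergraph V L) (v : V)
    (hproof : P.IsProofFor ent T η v) :
    mP P = mT (P.unravel v) := by
  have hpf : P.IsProofOf v := hproof.1
  have hequiv : P.unravel v = P.shiftUnravel v [] (fun p => P.labl (p.headD v)) := by
    apply ProofHypergraph.hg_ext
    · ext q
      simp only [ProofHypergraph.unravel, ProofHypergraph.shiftUnravel, Set.mem_setOf_eq]
      constructor
      · rintro ⟨hp, hl⟩
        exact ⟨q, hp, hl, by simp⟩
      · rintro ⟨p, hp, hl, rfl⟩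
        simp only [List.append_nil]
        exact ⟨hp, hl⟩
    · ext e
      simp only [ProofHypergraph.unravel, ProofHypergraph.shiftUnravel, Set.mem_setOf_eq,
        List.append_nil]
    · rfl
  rw [hequiv]
  exact ProofHypergraph.main_invariance hmP hmT P.verts.ncard P v hpf le_rfl [] _ (by
    intro p hp hl
    simp)
end

section
/- The unraveling of an acyclic hypergraph H at a vertex v is a tree, and the map sending each path to its starting vertex (and v to itself) is a hypergraph homomorphism from the unraveling to H. -/
/-- A (finite, directed, labeled) hypergraph: vertices, hyperedges `(S,d)` with a finite
source set `S` and target `d`, and a vertex labeling function. -/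
structure LHypergraph (V : Type) (L : Type) where
  verts : Set V
  edges : Set (Finset V × V)
  labl : V → L

namespace LHypergraph

variable {V L : Type}

/-- Every hyperedge has its sources and target among the vertices. -/
def WellFormed (H : LHypergraph V L) : Prop :=
  ∀ e ∈ H.edges, (e.1 : Set V) ⊆ H.verts ∧ e.2 ∈ H.verts

/-- One step along a hyperedge: `u` is a source of a hyperedge with target `w`. -/
def Step (H : LHypergraph V L) (u w : V) : Prop :=
  ∃ S : Finset V, (S, w) ∈ H.edges ∧ u ∈ S

/-- A path, represented by its (nonempty) list of vertices `d₀, d₁, …, d_q`;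
its length is `q = p.length - 1`. -/
def IsPathList (H : LHypergraph V L) (p : List V) : Prop :=
  p ≠ [] ∧ p.Chain' H.Step ∧ ∀ x ∈ p, x ∈ H.verts

/-- `u` reaches `w` via a path of positive length. -/
def Reaches (H : LHypergraph V L) (u w : V) : Prop :=
  ∃ p : List V, H.IsPathList p ∧ p.head? = some u ∧ p.getLast? = some w ∧ 2 ≤ p.length

/-- Acyclic: no path of positive length from a vertex to itself. -/
def Acyclic (H : LHypergraph V L) : Prop := ∀ u : V, ¬ H.Reaches u u

/-- A sink: a vertex occurring in the source set of no hyperedge. -/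
def IsSink (H : LHypergraph V L) (s : V) : Prop :=
  s ∈ H.verts ∧ ∀ e ∈ H.edges, s ∉ e.1

/-- A leaf: a vertex with no incoming hyperedge. -/
def IsLeaf (H : LHypergraph V L) (w : V) : Prop :=
  w ∈ H.verts ∧ ∀ e ∈ H.edges, e.2 ≠ w

/-- Every vertex has at most one incoming hyperedge. -/
def AtMostOneIn (H : LHypergraph V L) : Prop :=
  ∀ S₁ S₂ : Finset V, ∀ d : V, (S₁, d) ∈ H.edges → (S₂, d) ∈ H.edges → S₁ = S₂

/-- A (structural) proof with sink `v`: a finite, well-formed, acyclic hypergraph with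
at most one incoming hyperedge per vertex and exactly one sink, namely `v`. -/
def IsProofOf (H : LHypergraph V L) (v : V) : Prop :=
  H.WellFormed ∧ H.verts.Finite ∧ H.Acyclic ∧ H.AtMostOneIn ∧
  H.IsSink v ∧ ∀ w : V, H.IsSink w → w = v

/-- A proof for `T ⊨ η` w.r.t. a consequence relation `ent`: a grounded
(leaves labeled by theory sentences) and sound (each hyperedge is a valid inference)
proof whose unique sink `v` is labeled `η`. -/
def IsProofFor (ent : Set L → L → Prop) (T : Set L) (η : L)
    (H : LHypergraph V L) (v : V) : Prop :=
  H.IsProofOf v ∧ H.labl v = η ∧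
  (∀ w : V, H.IsLeaf w → H.labl w ∈ T) ∧
  ∀ e ∈ H.edges, ent (H.labl '' (e.1 : Set V)) (H.labl e.2)

/-- Subgraph relation. -/
def IsSubgraph (H' H : LHypergraph V L) : Prop :=
  H'.verts ⊆ H.verts ∧ H'.edges ⊆ H.edges ∧ H'.labl = H.labl

/-- The subproof of `H` with sink `v`: the restriction of `H` to `v` together with all
vertices having a path to `v`, with all hyperedges of `H` among those vertices. -/
def subproofAt (H : LHypergraph V L) (v : V) : LHypergraph V L where
  verts := {w | w ∈ H.verts ∧ (w = v ∨ H.Reaches w v)}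
  edges := {e | e ∈ H.edges ∧ (e.2 = v ∨ H.Reaches e.2 v)}
  labl := H.labl

end LHypergraph

namespace LHypergraph

/-- The unraveling of a hypergraph `H` at a vertex `v`: vertices are the paths of `H`
ending in `v` (the path `[v]` of length 0 represents `v` itself); there is a hyperedge
from the set of one-step extensions `{d' :: p | d' ∈ S}` to `p` whenever `(S, d)` is a
hyperedge of `H` into the first vertex `d` of `p`; labels are inherited from the
starting vertices of paths. -/
def unravel {V L : Type} [DecidableEq V] (H : LHypergraph V L) (v : V) :
    LHypergraph (List V) L where
  verts := {p | H.IsPathList p ∧ p.getLast? = some v}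
  edges := {e | ∃ (d : V) (ps : List V) (S : Finset V),
      H.IsPathList (d :: ps) ∧ (d :: ps).getLast? = some v ∧ (S, d) ∈ H.edges ∧
      e = (S.image (fun u => u :: d :: ps), d :: ps)}
  labl := fun p => H.labl (p.headD v)

end LHypergraph

namespace LHypergraph

/-- A homomorphism of labeled hypergraphs: a vertex map preserving vertices,
hyperedges and labels. -/
def IsHom {V V' L : Type} [DecidableEq V'] (h : V → V')
    (H : LHypergraph V L) (H' : LHypergraph V' L) : Prop :=
  (∀ x ∈ H.verts, h x ∈ H'.verts) ∧
  (∀ e ∈ H.edges, (e.1.image h, h e.2) ∈ H'.edges) ∧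
  ∀ x ∈ H.verts, H'.labl (h x) = H.labl x

end LHypergraph

namespace LHypergraph

/-- A tree with root `t`: `t` is reachable from every other vertex by exactly one path. -/
def IsTree {A L : Type} (H : LHypergraph A L) (t : A) : Prop :=
  t ∈ H.verts ∧ ∀ w ∈ H.verts, w ≠ t →
    ∃! p : List A, H.IsPathList p ∧ p.head? = some w ∧ p.getLast? = some t

end LHypergraph

namespace UnravelAux

open LHypergraph

variable {V L : Type} [DecidableEq V] {H : LHypergraph V L} {v : V}

lemma tails_ne_nil (l : List V) : l.tails ≠ [] := by
  cases l <;> simp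

lemma getLast?_cons_of_ne_nil' {α : Type*} {l : List α} (a : α) (h : l ≠ []) :
    (a :: l).getLast? = l.getLast? := by
  cases l with
  | nil => exact absurd rfl h
  | cons b l' => rw [List.getLast?_cons_cons]

lemma tails_dropLast_cons (a b : V) (l : List V) :
    (a::b::l).tails.dropLast = (a::b::l) :: (b::l).tails.dropLast := by
  rw [List.tails_cons, List.dropLast_cons_of_ne_nil (tails_ne_nil _)]

lemma step_iff {q p : List V} :
    (H.unravel v).Step q p ↔ ∃ (u d : V) (ps : List V) (S : Finset V),
      (S, d) ∈ H.edges ∧ u ∈ S ∧ H.IsPathList (d::ps) ∧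
      (d::ps).getLast? = some v ∧ p = d::ps ∧ q = u::d::ps := by
  constructor
  · rintro ⟨S', hS', hq⟩
    obtain ⟨d, ps, S, hpath, hlast, hSd, heq⟩ := hS'
    rw [Prod.ext_iff] at heq
    obtain ⟨h1, h2⟩ := heq
    simp only at h1 h2
    subst h1
    rw [Finset.mem_image] at hq
    obtain ⟨u, hu, hq⟩ := hq
    exact ⟨u, d, ps, S, hSd, hu, hpath, hlast, h2, hq.symm⟩
  · rintro ⟨u, d, ps, S, hSd, hu, hpath, hlast, rfl, rfl⟩
    refine ⟨S.image (fun x => x :: d :: ps), ⟨d, ps, S, hpath, hlast, hSd, rfl⟩, ?_⟩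
    exact Finset.mem_image_of_mem _ hu

lemma tail_mem_verts {a : V} {l : List V} (hl : l ≠ [])
    (h : (a :: l) ∈ (H.unravel v).verts) : l ∈ (H.unravel v).verts := by
  obtain ⟨⟨-, hchain, hmem⟩, hlast⟩ := h
  obtain ⟨b, l', rfl⟩ := List.exists_cons_of_ne_nil hl
  refine ⟨⟨by simp, hchain.tail, fun x hx => hmem x (List.mem_cons_of_mem _ hx)⟩, ?_⟩
  rwa [List.getLast?_cons_cons] at hlast

lemma exists_unravel_path (w : List V) (hw : w ∈ (H.unravel v).verts) :
    (H.unravel v).IsPathList w.tails.dropLast ∧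
    w.tails.dropLast.head? = some w ∧ w.tails.dropLast.getLast? = some [v] := by
  induction w with
  | nil => exact absurd rfl hw.1.1
  | cons a t ih =>
    cases t with
    | nil =>
      have hav : a = v := by simpa using hw.2
      subst hav
      exact ⟨⟨by simp, List.isChain_singleton _, by simpa using hw⟩, by simp, by simp⟩
    | cons b l =>
      have htl : (b :: l) ∈ (H.unravel v).verts := tail_mem_verts (by simp) hw
      obtain ⟨⟨-, hchain, hmem⟩, hhead, hlast⟩ := ih htl
      have hstep : (H.unravel v).Step (a::b::l) (b::l) := by
        have hab : H.Step a b := (List.isChain_cons_cons.mp hw.1.2.1).1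
        obtain ⟨S, hSb, haS⟩ := hab
        exact step_iff.mpr ⟨a, b, l, S, hSb, haS, htl.1, htl.2, rfl, rfl⟩
      rw [tails_dropLast_cons]
      refine ⟨⟨by simp, ?_, ?_⟩, by simp, ?_⟩
      · rw [List.Chain', List.isChain_cons]
        refine ⟨fun y hy => ?_, hchain⟩
        simp only [hhead, Option.mem_some_iff] at hy
        subst hy
        exact hstep
      · intro x hx
        rcases List.mem_cons.mp hx with rfl | hx
        · exact hw
        · exact hmem x hx
      · rw [getLast?_cons_of_ne_nil']
        · exact hlast
        · intro hnil
          rw [hnil] at hhead; simp at hhead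

lemma unravel_path_unique (q : List (List V)) (hq : (H.unravel v).IsPathList q)
    (hlast : q.getLast? = some [v]) {w : List V} (hh : q.head? = some w) :
    q = w.tails.dropLast := by
  induction q generalizing w with
  | nil => exact absurd rfl hq.1
  | cons x rest ih =>
    have hxw : x = w := by simpa using hh
    subst hxw
    cases rest with
    | nil =>
      have : x = [v] := by simpa using hlast
      subst this
      simp
    | cons y rest' =>
      have hstep : (H.unravel v).Step x y := (List.isChain_cons_cons.mp hq.2.1).1
      obtain ⟨u, d, ps, S, -, -, -, -, rfl, rfl⟩ := step_iff.mp hstep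
      have hq' : (H.unravel v).IsPathList ((d::ps) :: rest') :=
        ⟨by simp, hq.2.1.tail, fun z hz => hq.2.2 z (List.mem_cons_of_mem _ hz)⟩
      have hlast' : ((d::ps) :: rest').getLast? = some [v] := by
        rwa [List.getLast?_cons_cons] at hlast
      have := ih hq' hlast' (w := d::ps) rfl
      rw [tails_dropLast_cons, ← this]

end UnravelAux

/-- The unraveling of an acyclic hypergraph `H` at a vertex `v` is a
tree (with root the length-0 path `[v]`), and the map sending each path to its starting
vertex (and `[v]` to `v`) is a hypergraph homomorphism from the unraveling to `H`. -/
theorem unravel_isTree_and_hom {V L : Type} [DecidableEq V]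
    (H : LHypergraph V L) (v : V)
    (hwf : H.WellFormed) (hfin : H.verts.Finite) (hacyc : H.Acyclic)
    (hv : v ∈ H.verts) :
    (H.unravel v).IsTree [v] ∧
    LHypergraph.IsHom (fun p : List V => p.headD v) (H.unravel v) H := by
  constructor
  · constructor
    · exact ⟨⟨by simp, List.isChain_singleton _, by simpa using hv⟩, by simp⟩
    · intro w hw _
      obtain ⟨hpath, hhead, hlast⟩ := UnravelAux.exists_unravel_path w hw
      refine ⟨w.tails.dropLast, ⟨hpath, hhead, hlast⟩, ?_⟩
      rintro q ⟨hq, hqh, hql⟩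
      exact UnravelAux.unravel_path_unique q hq hql hqh
  · refine ⟨?_, ?_, ?_⟩
    · rintro p ⟨⟨hne, -, hmem⟩, -⟩
      obtain ⟨a, l, rfl⟩ := List.exists_cons_of_ne_nil hne
      exact hmem a (by simp)
    · rintro e ⟨d, ps, S, hpath, hlast, hSd, rfl⟩
      simp only [Finset.image_image]
      have : (S.image ((fun p : List V => p.headD v) ∘ (fun u => u :: d :: ps))) = S := by
        apply Finset.image_congr (g := id) (fun x _ => rfl) |>.trans Finset.image_id
      rw [this]
      exact hSd
    · intro x _
      rfl
end

section
/- If a proof P for T ⊨ η admits a homomorphism h into a derivation structure D, and each vertex of D has at most one label-equal copy (D contains no two vertices with the same label), then by iteratively replacing, for each pair v, v' of vertices of P with h(v) = h(v') such that there is a path from v to v' but not from v' to v, the subproof P_{v'} with the subproof P_v, one obtains after finitely many steps a proof P* with h(P*) ⊆ h(P) such that h(P*) is an acyclic subgraph of D in which every vertex has at most one incoming edge; hence h(P*) is a proof for T ⊨ η contained in D. -/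
namespace LHypergraph

/-- The homomorphic image `h(H)` of `H` under `h`, as a subhypergraph of the
target `D` (whose labeling it carries). -/
def himage {V V' L : Type} [DecidableEq V'] (h : V → V')
    (H : LHypergraph V L) (D : LHypergraph V' L) : LHypergraph V' L where
  verts := h '' H.verts
  edges := {e' | ∃ e ∈ H.edges, e' = (e.1.image h, h e.2)}
  labl := D.labl

end LHypergraph


section Aux

open LHypergraph

private lemma chainrel_head_last {α : Type*} {R : α → α → Prop} (hR : Transitive R) :
    ∀ (p : List α), p.Chain' R → ∀ u w, p.head? = some u → p.getLast? = some w →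
      2 ≤ p.length → R u w := by
  intro p
  induction p with
  | nil => simp
  | cons a l ih =>
    intro hch u w hu hw hlen
    cases l with
    | nil => simp at hlen
    | cons b m =>
      replace hch := List.isChain_cons_cons.1 hch
      simp only [List.head?_cons, Option.some.injEq] at hu
      subst hu
      rw [List.getLast?_cons_cons] at hw
      cases m with
      | nil =>
        simp at hw
        subst hw
        exact hch.1
      | cons c m' =>
        exact hR hch.1 (ih hch.2 b w rfl hw (by simp))

/-- If some rank function strictly increases along steps, the hypergraph is acyclic. -/
private lemma acyclic_of_rank {V L : Type} (H : LHypergraph V L) (r : V → ℕ)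
    (hr : ∀ u w, H.Step u w → r u < r w) : H.Acyclic := by
  rintro u ⟨p, ⟨hne, hch, hmem⟩, hh, hl, hlen⟩
  have hch' : p.Chain' (fun a b => r a < r b) := hch.imp (fun a b hab => hr a b hab)
  have htr : Transitive (fun a b => r a < r b) := fun _ _ _ hab hbc => lt_trans hab hbc
  have : r u < r u := chainrel_head_last htr p hch' u u hh hl hlen
  exact lt_irrefl _ this

/-- Extend a reaching path by one step. -/
private lemma reaches_step {V L : Type} {H : LHypergraph V L} {u x w : V}
    (hr : H.Reaches u x) (hs : H.Step x w) (hw : w ∈ H.verts) : H.Reaches u w := by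
  obtain ⟨p, ⟨hne, hch, hmem⟩, hh, hl, hlen⟩ := hr
  refine ⟨p ++ [w], ⟨by simp, ?_, ?_⟩, ?_, ?_, ?_⟩
  · refine hch.append (List.isChain_singleton w) ?_
    intro a ha b hb
    simp only [List.head?_cons, Option.mem_def, Option.some.injEq] at hb
    rw [Option.mem_def, hl] at ha
    cases ha; cases hb
    exact hs
  · intro y hy
    rcases List.mem_append.1 hy with hy | hy
    · exact hmem y hy
    · simp at hy; subst hy; exact hw
  · rw [List.head?_append_of_ne_nil _ hne, hh]
  · simp [List.getLast?_concat]
  · simp only [List.length_append, List.length_singleton]; omega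

/-- A single step gives a reaching path of length two. -/
private lemma step_reaches {V L : Type} {H : LHypergraph V L} {u w : V}
    (hs : H.Step u w) (hu : u ∈ H.verts) (hw : w ∈ H.verts) : H.Reaches u w := by
  refine ⟨[u, w], ⟨by simp, ?_, ?_⟩, by simp, by simp, by simp⟩
  · exact List.isChain_cons_cons.2 ⟨hs, List.isChain_singleton w⟩
  · intro y hy
    rcases List.mem_cons.1 hy with hy | hy
    · subst hy; exact hu
    · simp at hy; subst hy; exact hw

/-- The set of vertices of the repaired proof: the canonical representative of the sink
together with everything obtained by repeatedly passing to (canonical representatives of)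
premises. -/
inductive StarVerts {V V' L : Type} (P : LHypergraph V L) (h : V → V') (c : V' → V)
    (v0 : V) : V → Prop
  | base : StarVerts P h c v0 v0
  | step {S : Finset V} {x s : V} : StarVerts P h c v0 x → (S, x) ∈ P.edges → s ∈ S →
      StarVerts P h c v0 (c (h s))

end Aux

/-- If a proof `P` for `T ⊨ η` admits a homomorphism `h` into a
derivation structure `D` containing no two vertices with the same label, then
(by iteratively replacing subproofs `P_{v'}` by subproofs `P_v` for merged vertices
`h v = h v'` with a path from `v` to `v'` but not back) one obtains a proof `P*` for
`T ⊨ η`, using a subset of the vertices of `P`, such that `h(P*) ⊆ h(P)` and `h(P*)`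
is an acyclic subgraph of `D` with at most one incoming hyperedge per vertex; hence
`h(P*)` is a proof for `T ⊨ η` contained in `D`. -/
theorem homomorphic_image_contains_proof {V V' L : Type} [DecidableEq V']
    (ent : Set L → L → Prop) (T : Set L) (η : L)
    (P : LHypergraph V L) (vP : V) (hP : P.IsProofFor ent T η vP)
    (D : LHypergraph V' L)
    (hDwf : D.WellFormed)
    (hDground : ∀ w : V', D.IsLeaf w → D.labl w ∈ T)
    (hDsound : ∀ e ∈ D.edges, ent (D.labl '' (e.1 : Set V')) (D.labl e.2))
    (hdistinct : ∀ u ∈ D.verts, ∀ w ∈ D.verts, D.labl u = D.labl w → u = w)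
    (h : V → V') (hhom : LHypergraph.IsHom h P D) :
    ∃ (Pstar : LHypergraph V L) (vstar : V),
      Pstar.verts ⊆ P.verts ∧
      Pstar.IsProofFor ent T η vstar ∧
      LHypergraph.IsHom h Pstar D ∧
      (LHypergraph.himage h Pstar D).IsSubgraph (LHypergraph.himage h P D) ∧
      (LHypergraph.himage h Pstar D).IsSubgraph D ∧
      (LHypergraph.himage h Pstar D).IsProofFor ent T η (h vstar) := by
  classical
  obtain ⟨⟨Pwf, Pfin, Pacyc, Pone, ⟨PsinkM, PsinkS⟩, Psinku⟩, Plab, Pground, Psound⟩ := hP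
  obtain ⟨homV, homE, homL⟩ := hhom
  have hvPV : vP ∈ P.verts := PsinkM
  -- a rank function on `P`, strictly increasing along steps
  set rank : V → ℕ := fun x => {u | u ∈ P.verts ∧ P.Reaches u x}.ncard with hrankdef
  have hAfin : ∀ x : V, {u | u ∈ P.verts ∧ P.Reaches u x}.Finite :=
    fun x => Pfin.subset (fun u hu => hu.1)
  have rank_lt : ∀ u w : V, P.Step u w → rank u < rank w := by
    intro u w hst
    obtain ⟨S, hedge, huS⟩ := hst
    have hu : u ∈ P.verts := (Pwf _ hedge).1 huS
    have hw : w ∈ P.verts := (Pwf _ hedge).2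
    have hss : {a | a ∈ P.verts ∧ P.Reaches a u} ⊂ {a | a ∈ P.verts ∧ P.Reaches a w} := by
      constructor
      · rintro a ⟨haV, har⟩
        exact ⟨haV, reaches_step har ⟨S, hedge, huS⟩ hw⟩
      · intro hsub
        have hmem : u ∈ {a | a ∈ P.verts ∧ P.Reaches a w} :=
          ⟨hu, step_reaches ⟨S, hedge, huS⟩ hu hw⟩
        exact Pacyc u (hsub hmem).2
    exact Set.ncard_lt_ncard hss (hAfin w)
  -- the canonical representative (of minimal rank) of each merged class
  set c : V' → V := fun d =>
    if hd : ∃ x, x ∈ P.verts ∧ h x = d then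
      Function.argminOn rank {x | x ∈ P.verts ∧ h x = d}
        ⟨hd.choose, hd.choose_spec⟩
    else vP with hcdef
  have hcmem : ∀ s : V, s ∈ P.verts → c (h s) ∈ P.verts ∧ h (c (h s)) = h s := by
    intro s hs
    have hd : ∃ x, x ∈ P.verts ∧ h x = h s := ⟨s, hs, rfl⟩
    simp only [hcdef, dif_pos hd]
    exact Function.argminOn_mem rank {x | x ∈ P.verts ∧ h x = h s} _
  have hcmin : ∀ s : V, s ∈ P.verts → rank (c (h s)) ≤ rank s := by
    intro s hs
    have hd : ∃ x, x ∈ P.verts ∧ h x = h s := ⟨s, hs, rfl⟩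
    simp only [hcdef, dif_pos hd]
    exact Function.argminOn_le rank {x | x ∈ P.verts ∧ h x = h s}
      (a := s) ⟨hs, rfl⟩
  obtain ⟨vstar, hvstardef⟩ : ∃ v : V, v = c (h vP) := ⟨_, rfl⟩
  -- invariant for the vertices of the repaired proof
  have hSV : ∀ x : V, StarVerts P h c vstar x →
      x ∈ P.verts ∧ rank x ≤ rank vstar ∧ c (h x) = x := by
    intro x hx
    induction hx with
    | base =>
      refine ⟨hvstardef ▸ (hcmem vP hvPV).1, le_refl _, ?_⟩
      rw [hvstardef, (hcmem vP hvPV).2]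
    | @step S x s hxs hedge hsS ih =>
      have hsV : s ∈ P.verts := (Pwf _ hedge).1 hsS
      refine ⟨(hcmem s hsV).1, ?_, ?_⟩
      · refine le_of_lt ?_
        calc rank (c (h s)) ≤ rank s := hcmin s hsV
          _ < rank x := rank_lt s x ⟨S, hedge, hsS⟩
          _ ≤ rank vstar := ih.2.1
      · rw [(hcmem s hsV).2]
  -- the repaired proof
  set Q : LHypergraph V L :=
    { verts := {x | StarVerts P h c vstar x}
      edges := {e | ∃ (S : Finset V) (x : V), (S, x) ∈ P.edges ∧ StarVerts P h c vstar x ∧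
        e = (S.image (fun s => c (h s)), x)}
      labl := P.labl } with hQdef
  have hQsub : Q.verts ⊆ P.verts := fun x hx => (hSV x hx).1
  have hQstep : ∀ u w : V, Q.Step u w → rank u < rank w := by
    rintro u w ⟨S', ⟨S, x, hedge, hxQ, heq⟩, huS'⟩
    simp only [Prod.mk.injEq] at heq
    obtain ⟨rfl, rfl⟩ := heq
    obtain ⟨s, hsS, rfl⟩ := Finset.mem_image.1 huS'
    have hsV : s ∈ P.verts := (Pwf _ hedge).1 hsS
    have e1 : rank (c (h s)) ≤ rank s := hcmin s hsV
    have e2 : rank s < rank w := rank_lt s w ⟨S, hedge, hsS⟩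
    omega
  have hQacyc : Q.Acyclic := acyclic_of_rank Q rank hQstep
  have hQwf : Q.WellFormed := by
    rintro e ⟨S, x, hedge, hxQ, rfl⟩
    constructor
    · intro y hy
      simp only [Finset.coe_image, Set.mem_image, Finset.mem_coe] at hy
      obtain ⟨s, hsS, rfl⟩ := hy
      exact StarVerts.step hxQ hedge hsS
    · exact hxQ
  have hQfin : Q.verts.Finite := Pfin.subset hQsub
  have hQone : Q.AtMostOneIn := by
    rintro S₁ S₂ d ⟨A₁, x₁, he₁, hx₁, heq₁⟩ ⟨A₂, x₂, he₂, hx₂, heq₂⟩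
    simp only [Prod.mk.injEq] at heq₁ heq₂
    obtain ⟨rfl, rfl⟩ := heq₁
    obtain ⟨rfl, h2⟩ := heq₂
    subst h2
    rw [Pone A₁ A₂ _ he₁ he₂]
  have hQsinkNotSrc : ∀ e ∈ Q.edges, vstar ∉ e.1 := by
    rintro e ⟨S, x, hedge, hxQ, rfl⟩ hmem
    obtain ⟨s, hsS, hv⟩ := Finset.mem_image.1 hmem
    have hsV : s ∈ P.verts := (Pwf _ hedge).1 hsS
    have e1 : rank (c (h s)) ≤ rank s := hcmin s hsV
    have e2 : rank s < rank x := rank_lt s x ⟨S, hedge, hsS⟩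
    have e3 : rank x ≤ rank vstar := (hSV x hxQ).2.1
    rw [hv] at e1
    omega
  have hQsink : Q.IsSink vstar := ⟨StarVerts.base, hQsinkNotSrc⟩
  have hQsinku : ∀ w, Q.IsSink w → w = vstar := by
    rintro w ⟨hwQ, hns⟩
    cases hwQ with
    | base => rfl
    | @step S x s hxQ hedge hsS =>
      exact absurd (Finset.mem_image_of_mem _ hsS)
        (hns (S.image (fun s => c (h s)), x) ⟨S, x, hedge, hxQ, rfl⟩)
  have hQproofOf : Q.IsProofOf vstar := ⟨hQwf, hQfin, hQacyc, hQone, hQsink, hQsinku⟩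
  -- label facts
  have hlabc : ∀ s ∈ P.verts, P.labl (c (h s)) = P.labl s := by
    intro s hs
    obtain ⟨hcV, hch⟩ := hcmem s hs
    rw [← homL _ hcV, hch, homL s hs]
  have hhc : ∀ s ∈ P.verts, h (c (h s)) = h s := fun s hs => (hcmem s hs).2
  have himg_eq : ∀ S : Finset V, (S : Set V) ⊆ P.verts →
      (S.image (fun s => c (h s))).image h = S.image h := by
    intro S hS
    rw [Finset.image_image]
    exact Finset.image_congr (fun s hsS => hhc s (hS hsS))
  have hlab_img : ∀ S : Finset V, (S : Set V) ⊆ P.verts →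
      P.labl '' ((S.image (fun s => c (h s))) : Set V) = P.labl '' (S : Set V) := by
    intro S hS
    rw [Finset.coe_image, ← Set.image_comp]
    exact Set.image_congr (fun s hsS => hlabc s (hS hsS))
  have hQlabv : P.labl vstar = η := by
    rw [hvstardef, hlabc vP hvPV, Plab]
  have hQground : ∀ w, Q.IsLeaf w → Q.labl w ∈ T := by
    rintro w ⟨hwQ, hnl⟩
    have hwP : P.IsLeaf w := by
      refine ⟨hQsub hwQ, ?_⟩
      intro e hedge heq
      refine hnl (e.1.image (fun s => c (h s)), w) ⟨e.1, w, ?_, hwQ, rfl⟩ rfl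
      rw [← heq]
      exact hedge
    exact Pground w hwP
  have hQsound : ∀ e ∈ Q.edges, ent (Q.labl '' (e.1 : Set V)) (Q.labl e.2) := by
    rintro e ⟨S, x, hedge, hxQ, rfl⟩
    show ent (P.labl '' _) (P.labl x)
    rw [hlab_img S (Pwf _ hedge).1]
    exact Psound (S, x) hedge
  have hQproofFor : Q.IsProofFor ent T η vstar := ⟨hQproofOf, hQlabv, hQground, hQsound⟩
  -- homomorphism
  have hQhom : LHypergraph.IsHom h Q D := by
    refine ⟨fun x hx => homV x (hQsub hx), ?_, fun x hx => homL x (hQsub hx)⟩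
    rintro e ⟨S, x, hedge, hxQ, rfl⟩
    show ((S.image (fun s => c (h s))).image h, h x) ∈ D.edges
    rw [himg_eq S (Pwf _ hedge).1]
    exact homE (S, x) hedge
  -- subgraph facts
  have hsub1 : (LHypergraph.himage h Q D).IsSubgraph (LHypergraph.himage h P D) := by
    refine ⟨Set.image_mono hQsub, ?_, rfl⟩
    rintro e' ⟨e, ⟨S, x, hedge, hxQ, rfl⟩, rfl⟩
    exact ⟨(S, x), hedge, by rw [show ((S.image (fun s => c (h s))).image h) = S.image h from
      himg_eq S (Pwf _ hedge).1]⟩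
  have hsub2 : (LHypergraph.himage h Q D).IsSubgraph D := by
    refine ⟨?_, ?_, rfl⟩
    · rintro w' ⟨x, hx, rfl⟩
      exact homV x (hQsub hx)
    · rintro e' ⟨e, he, rfl⟩
      exact hQhom.2.1 e he
  -- `h` is injective on the repaired proof
  have hinj : ∀ x y : V, StarVerts P h c vstar x → StarVerts P h c vstar y →
      h x = h y → x = y := by
    intro x y hx hy hxy
    rw [← (hSV x hx).2.2, ← (hSV y hy).2.2, hxy]
  -- the image is a proof
  have hIstep : ∀ u' w', (LHypergraph.himage h Q D).Step u' w' →
      rank (c u') < rank (c w') := by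
    rintro u' w' ⟨S', ⟨e, ⟨S, x, hedge, hxQ, rfl⟩, heq⟩, huS'⟩
    simp only [Prod.mk.injEq] at heq
    obtain ⟨rfl, rfl⟩ := heq
    obtain ⟨a, haA, rfl⟩ := Finset.mem_image.1 huS'
    obtain ⟨s, hsS, rfl⟩ := Finset.mem_image.1 haA
    have hsV : s ∈ P.verts := (Pwf _ hedge).1 hsS
    rw [hhc s hsV, (hSV x hxQ).2.2]
    have e1 : rank (c (h s)) ≤ rank s := hcmin s hsV
    have e2 : rank s < rank x := rank_lt s x ⟨S, hedge, hsS⟩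
    omega
  have hIacyc : (LHypergraph.himage h Q D).Acyclic :=
    acyclic_of_rank _ (fun u' => rank (c u')) hIstep
  have hIwf : (LHypergraph.himage h Q D).WellFormed := by
    rintro e' ⟨e, heQ, rfl⟩
    obtain ⟨hsrc, htgt⟩ := hQwf e heQ
    constructor
    · intro y hy
      simp only [Finset.coe_image, Set.mem_image, Finset.mem_coe] at hy
      obtain ⟨a, ha, rfl⟩ := hy
      exact ⟨a, hsrc ha, rfl⟩
    · exact ⟨e.2, htgt, rfl⟩
  have hIfin : (LHypergraph.himage h Q D).verts.Finite := hQfin.image h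
  have hIone : (LHypergraph.himage h Q D).AtMostOneIn := by
    rintro S₁ S₂ d ⟨e₁, ⟨A₁, x₁, he₁, hx₁, rfl⟩, heq₁⟩ ⟨e₂, ⟨A₂, x₂, he₂, hx₂, rfl⟩, heq₂⟩
    simp only [Prod.mk.injEq] at heq₁ heq₂
    obtain ⟨rfl, hd₁⟩ := heq₁
    obtain ⟨rfl, hd₂⟩ := heq₂
    have hx12 : x₁ = x₂ := hinj _ _ hx₁ hx₂ (by rw [← hd₁, ← hd₂])
    subst hx12
    rw [Pone A₁ A₂ _ he₁ he₂]
  have hIsink : (LHypergraph.himage h Q D).IsSink (h vstar) := by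
    refine ⟨⟨vstar, StarVerts.base, rfl⟩, ?_⟩
    rintro e' ⟨e, ⟨S, x, hedge, hxQ, rfl⟩, rfl⟩ hmem
    obtain ⟨a, haA, hva⟩ := Finset.mem_image.1 hmem
    obtain ⟨s, hsS, rfl⟩ := Finset.mem_image.1 haA
    have haQ : StarVerts P h c vstar (c (h s)) := StarVerts.step hxQ hedge hsS
    have hv : vstar = c (h s) := hinj _ _ StarVerts.base haQ hva.symm
    refine hQsinkNotSrc (S.image (fun s => c (h s)), x) ⟨S, x, hedge, hxQ, rfl⟩ ?_
    rw [hv]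
    exact Finset.mem_image_of_mem _ hsS
  have hIsinku : ∀ w', (LHypergraph.himage h Q D).IsSink w' → w' = h vstar := by
    rintro w' ⟨⟨w, hwQ, rfl⟩, hns⟩
    cases hwQ with
    | base => rfl
    | @step S x s hxQ hedge hsS =>
      exact absurd (Finset.mem_image_of_mem h (Finset.mem_image_of_mem _ hsS))
        (hns ((S.image (fun s => c (h s))).image h, h x)
          ⟨(S.image (fun s => c (h s)), x), ⟨S, x, hedge, hxQ, rfl⟩, rfl⟩)
  have hvstarV : vstar ∈ P.verts := hQsub StarVerts.base
  have hIlab : (LHypergraph.himage h Q D).labl (h vstar) = η := by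
    show D.labl (h vstar) = η
    rw [homL vstar hvstarV, hQlabv]
  have hIground : ∀ w', (LHypergraph.himage h Q D).IsLeaf w' →
      (LHypergraph.himage h Q D).labl w' ∈ T := by
    rintro w' ⟨⟨w, hwQ, rfl⟩, hnl⟩
    have hQleaf : Q.IsLeaf w := by
      refine ⟨hwQ, ?_⟩
      intro e heQ heq
      exact hnl (e.1.image h, h e.2) ⟨e, heQ, rfl⟩ (by rw [heq])
    show D.labl (h w) ∈ T
    rw [homL w (hQsub hwQ)]
    exact hQground w hQleaf
  have hIsound : ∀ e' ∈ (LHypergraph.himage h Q D).edges,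
      ent ((LHypergraph.himage h Q D).labl '' (e'.1 : Set V'))
        ((LHypergraph.himage h Q D).labl e'.2) := by
    rintro e' ⟨e, ⟨S, x, hedge, hxQ, rfl⟩, rfl⟩
    have hSP : (S : Set V) ⊆ P.verts := (Pwf _ hedge).1
    show ent (D.labl '' _) (D.labl (h x))
    rw [himg_eq S hSP]
    have himg : D.labl '' ((S.image h : Finset V') : Set V') = P.labl '' (S : Set V) := by
      rw [Finset.coe_image, ← Set.image_comp]
      exact Set.image_congr (fun s hsS => homL s (hSP hsS))
    rw [himg, homL x (Pwf _ hedge).2]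
    exact Psound (S, x) hedge
  exact ⟨Q, vstar, hQsub, hQproofFor, hQhom, hsub1, hsub2,
    ⟨⟨hIwf, hIfin, hIacyc, hIone, hIsink, hIsinku⟩, hIlab, hIground, hIsound⟩⟩
end
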